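/- Let G be a finite simple graph. A vertex v of G is a winning opening move for the first player in the snake-in-the-box game on G (i.e., Win({v}, v) fails) if and only if v is inessential, i.e., there exists a maximum matching of G that does not cover v. -/
import Mathlib


/-- `M` is a matching of `G`: a set of edges of `G`, no two of which share a vertex. -/
def IsMatching {V : Type*} (G : SimpleGraph V) (M : Finset (Sym2 V)) : Prop :=
  (∀ e ∈ M, e ∈ G.edgeSet) ∧
  ∀ e ∈ M, ∀ f ∈ M, e ≠ f → ∀ v : V, v ∈ e → v ∉ f

/-- The vertex `v` is covered by the matching `M`, i.e. it is an endpoint of an edge of `M`. -/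
def Covers {V : Type*} (M : Finset (Sym2 V)) (v : V) : Prop := ∃ e ∈ M, v ∈ e

/-- `M` is a maximum matching of `G`: a matching of maximum cardinality among all matchings. -/
def IsMaximumMatching {V : Type*} (G : SimpleGraph V) (M : Finset (Sym2 V)) : Prop :=
  IsMatching G M ∧ ∀ M' : Finset (Sym2 V), IsMatching G M' → M'.card ≤ M.card

/-- The snake-in-the-box winning predicate: `Win G S v` means the player about to move from
the position with visited set `S` and current vertex `v ∈ S` has a winning strategy.
`Win G S v` holds iff there is `w` adjacent to `v`, not yet visited, with `¬ Win G (insert w S) w`. -/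
def Win {V : Type*} [Fintype V] [DecidableEq V] (G : SimpleGraph V) (S : Finset V) (v : V) :
    Prop :=
  ∃ w : V, ∃ _ : G.Adj v w, ∃ _ : w ∉ S, ¬ Win G (insert w S) w
termination_by Sᶜ.card
decreasing_by
  simp only [Finset.compl_insert]
  exact Finset.card_erase_lt_of_mem (Finset.mem_compl.mpr (by assumption))

section Aux

variable {V : Type*} [Fintype V] [DecidableEq V] (G : SimpleGraph V)

/-- A matching of `G` all of whose endpoints lie in the allowed set `A`. -/
def MatchIn (A : Finset V) (M : Finset (Sym2 V)) : Prop :=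
  IsMatching G M ∧ ∀ e ∈ M, ∀ x ∈ e, x ∈ A

/-- `v` is essential relative to `A`: every maximum matching within `A` covers `v`. -/
def Ess (A : Finset V) (v : V) : Prop :=
  ∀ M, MatchIn G A M → (∀ M', MatchIn G A M' → M'.card ≤ M.card) → Covers M v

lemma matchIn_empty (A : Finset V) : MatchIn G A (∅ : Finset (Sym2 V)) := by
  refine ⟨⟨?_, ?_⟩, ?_⟩ <;> intro e he <;> exact absurd he (Finset.notMem_empty e)

lemma exists_max_matchIn (A : Finset V) :
    ∃ M, MatchIn G A M ∧ ∀ M', MatchIn G A M' → M'.card ≤ M.card := by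
  classical
  obtain ⟨M, hM, hmax⟩ := Finset.exists_max_image
    (Finset.univ.filter fun M => MatchIn G A M) Finset.card
    ⟨∅, by simp [matchIn_empty]⟩
  refine ⟨M, (Finset.mem_filter.mp hM).2, fun M' hM' => hmax M' ?_⟩
  simp [Finset.mem_filter, hM']

lemma matchIn_mono {A B : Finset V} (h : A ⊆ B) {M : Finset (Sym2 V)}
    (hM : MatchIn G A M) : MatchIn G B M :=
  ⟨hM.1, fun e he x hx => h (hM.2 e he x hx)⟩

lemma key (S : Finset V) (v : V) (hv : v ∈ S) :
    Win G S v ↔ Ess G (insert v Sᶜ) v := by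
  classical
  have hvc : v ∉ Sᶜ := by simp [hv]
  rw [Win]
  constructor
  · rintro ⟨w, hadj, hw, hnwin⟩
    have hwc : w ∈ Sᶜ := Finset.mem_compl.mpr hw
    have hA' : insert w (insert w S)ᶜ = Sᶜ := by
      rw [Finset.compl_insert, Finset.insert_erase hwc]
    have ih := key (insert w S) w (Finset.mem_insert_self w S)
    rw [hA'] at ih
    have hnEss : ¬ Ess G Sᶜ w := fun h => hnwin (ih.mpr h)
    unfold Ess at hnEss
    push_neg at hnEss
    obtain ⟨M, hM, hMmax, hMw⟩ := hnEss
    intro N hN hNmax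
    by_contra hNv
    -- N is a matching within Sᶜ
    have hNc : MatchIn G Sᶜ N := by
      refine ⟨hN.1, fun e he x hx => ?_⟩
      have hxA := hN.2 e he x hx
      rcases Finset.mem_insert.mp hxA with h | h
      · exact absurd ⟨e, he, h ▸ hx⟩ hNv
      · exact h
    -- build a bigger matching in A
    have hvM : ∀ f ∈ M, v ∉ f := fun f hf hvf => hvc (hM.2 f hf v hvf)
    have hwM : ∀ f ∈ M, w ∉ f := fun f hf hwf => hMw ⟨f, hf, hwf⟩
    have henM : s(v, w) ∉ M := fun h => hvM _ h (by simp)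
    have hM' : MatchIn G (insert v Sᶜ) (insert s(v, w) M) := by
      refine ⟨⟨?_, ?_⟩, ?_⟩
      · intro e he
        rcases Finset.mem_insert.mp he with h | h
        · rw [h]; exact hadj
        · exact hM.1.1 e h
      · intro e he f hf hef x hxe
        rcases Finset.mem_insert.mp he with h | h <;>
          rcases Finset.mem_insert.mp hf with h' | h'
        · exact absurd (h.trans h'.symm) hef
        · subst h
          rcases Sym2.mem_iff.mp hxe with rfl | rfl
          · exact hvM f h'
          · exact hwM f h'
        · subst h'
          intro hxf
          rcases Sym2.mem_iff.mp hxf with rfl | rfl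
          · exact hvM e h hxe
          · exact hwM e h hxe
        · exact hM.1.2 e h f h' hef x hxe
      · intro e he x hx
        rcases Finset.mem_insert.mp he with h | h
        · subst h
          rcases Sym2.mem_iff.mp hx with rfl | rfl
          · exact Finset.mem_insert_self _ _
          · exact Finset.mem_insert_of_mem hwc
        · exact Finset.mem_insert_of_mem (hM.2 e h x hx)
    have h1 : (insert s(v, w) M).card ≤ N.card := hNmax _ hM'
    rw [Finset.card_insert_of_notMem henM] at h1
    have h2 : N.card ≤ M.card := hMmax N hNc
    omega
  · intro hEss
    obtain ⟨N, hN, hNmax⟩ := exists_max_matchIn G (insert v Sᶜ)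
    obtain ⟨e, he, hve⟩ := hEss N hN hNmax
    set w := Sym2.Mem.other hve with hw_def
    have hevw : s(v, w) = e := Sym2.other_spec hve
    have hadj : G.Adj v w := by
      have := hN.1.1 e he
      rw [← hevw] at this
      exact this
    have hwen : w ∈ e := hevw ▸ (by simp)
    have hwv : w ≠ v := fun h => G.irrefl (h ▸ hadj)
    have hwc : w ∈ Sᶜ := by
      have := hN.2 e he w hwen
      rcases Finset.mem_insert.mp this with h | h
      · exact absurd h hwv
      · exact h
    have hwS : w ∉ S := Finset.mem_compl.mp hwc
    refine ⟨w, hadj, hwS, ?_⟩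
    have hA' : insert w (insert w S)ᶜ = Sᶜ := by
      rw [Finset.compl_insert, Finset.insert_erase hwc]
    have ih := key (insert w S) w (Finset.mem_insert_self w S)
    rw [hA'] at ih
    rw [ih]
    -- show w is inessential in Sᶜ, witnessed by N.erase e
    intro hEssW
    have hMc : MatchIn G Sᶜ (N.erase e) := by
      refine ⟨⟨fun f hf => hN.1.1 f (Finset.mem_of_mem_erase hf),
        fun f hf g hg => hN.1.2 f (Finset.mem_of_mem_erase hf) g (Finset.mem_of_mem_erase hg)⟩,
        ?_⟩
      intro f hf x hx
      have hfe : f ≠ e := Finset.ne_of_mem_erase hf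
      have hxA := hN.2 f (Finset.mem_of_mem_erase hf) x hx
      rcases Finset.mem_insert.mp hxA with rfl | h
      · exact absurd hx (hN.1.2 e he f (Finset.mem_of_mem_erase hf) hfe.symm x (hevw ▸ by simp))
      · exact h
    have hMmax : ∀ M', MatchIn G Sᶜ M' → M'.card ≤ (N.erase e).card := by
      intro M' hM'
      have hM'A : MatchIn G (insert v Sᶜ) M' :=
        matchIn_mono G (Finset.subset_insert v Sᶜ) hM'
      have hle : M'.card ≤ N.card := hNmax M' hM'A
      rw [Finset.card_erase_of_mem he]
      rcases Nat.lt_or_ge M'.card N.card with h | h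
      · omega
      · exfalso
        have heq : M'.card = N.card := le_antisymm hle h
        have : Covers M' v := hEss M' hM'A (fun M'' hM'' => heq ▸ hNmax M'' hM'')
        obtain ⟨f, hf, hvf⟩ := this
        exact hvc (hM'.2 f hf v hvf)
    have hMw : ¬ Covers (N.erase e) w := by
      rintro ⟨f, hf, hwf⟩
      exact hN.1.2 e he f (Finset.mem_of_mem_erase hf) (Finset.ne_of_mem_erase hf).symm
        w hwen hwf
    exact hMw (hEssW (N.erase e) hMc hMmax)
termination_by Sᶜ.card
decreasing_by
  all_goals
  · simp only [Finset.compl_insert]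
    exact Finset.card_erase_lt_of_mem hwc

end Aux

/-- A vertex `v` of a finite simple graph `G` is a winning opening move in snake-in-the-box
iff `v` is inessential, i.e. some maximum matching of `G` does not cover `v`. -/
theorem winning_opening_iff_inessential {V : Type*} [Fintype V] [DecidableEq V]
    (G : SimpleGraph V) (v : V) :
    ¬ Win G {v} v ↔ ∃ M : Finset (Sym2 V), IsMaximumMatching G M ∧ ¬ Covers M v := by
  have huniv : insert v ({v} : Finset V)ᶜ = Finset.univ := by
    ext x
    simp [em (x = v), eq_comm]
  have hmi : ∀ M : Finset (Sym2 V), MatchIn G Finset.univ M ↔ IsMatching G M := by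
    intro M
    constructor
    · exact fun h => h.1
    · exact fun h => ⟨h, fun e _ x _ => Finset.mem_univ x⟩
  rw [key G {v} v (Finset.mem_singleton_self v), huniv]
  unfold Ess
  constructor
  · intro h
    push_neg at h
    obtain ⟨M, hM, hMmax, hMv⟩ := h
    exact ⟨M, ⟨(hmi M).mp hM, fun M' hM' => hMmax M' ((hmi M').mpr hM')⟩, hMv⟩
  · rintro ⟨M, ⟨hM, hMmax⟩, hMv⟩ h
    exact hMv (h M ((hmi M).mpr hM) (fun M' hM' => hMmax M' ((hmi M').mp hM')))
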